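/- Let ℓ ≥ 1 and N > 2ℓ+2, with periodic boundary conditions or special boundary conditions s = (c₁, c_N), and Ñ = N − (ℓ+2). Let σ' be a configuration of Ñ sites all of whose clusters have length at most ℓ, whose first site belongs to a cluster of length k and whose last site belongs to a cluster of length m, and suppose that k + m > ℓ in the periodic case, or that k > c₁ and m = c_N in the special case. Let τ be the N-site configuration whose first ℓ+2 sites form χ = 0 1…1 0 and whose last Ñ sites form σ'. Then there exists φ ∈ V_N such that e_τ = Q₁ φ; i.e., e_τ is a Q₁-coboundary. -/
import Mathlib


attribute [local instance 10] Classical.propDecidable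

noncomputable section

/-- A configuration of `N` sites: `true` = occupied, `false` = empty. -/
abbrev Config (N : ℕ) := Fin N → Bool

/-- Extension of a configuration to all of `ℕ`, by empty sites outside the chain. -/
def extc {N : ℕ} (σ : Config N) (t : ℕ) : Bool :=
  if h : t < N then σ ⟨t, h⟩ else false

/-- The fermion number: the number of occupied sites. -/
def fermions {N : ℕ} (σ : Config N) : ℕ :=
  (Finset.univ.filter fun i => σ i = true).card

/-- Allowed configurations of the open chain of `N` sites with exclusion parameter `ℓ`
and special boundary conditions `(c₁, cN)`: no cluster is longer than `ℓ`, the cluster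
containing the first site (if occupied) has length at most `c₁`, and the cluster
containing the last site (if occupied) has length at most `cN`. -/
def OpenOK (N ℓ c₁ cN : ℕ) (σ : Config N) : Prop :=
  (∀ a : ℕ, ¬ ∀ k ≤ ℓ, extc σ (a + k) = true) ∧
  (¬ (c₁ + 1 ≤ N ∧ ∀ k ≤ c₁, extc σ k = true)) ∧
  (¬ (cN + 1 ≤ N ∧ ∀ k ≤ cN, extc σ (N - 1 - k) = true))

/-- Cyclic shift of a site of the closed chain by `k` steps. -/
def cyc {N : ℕ} (i : Fin N) (k : ℕ) : Fin N :=
  ⟨(i.1 + k) % N, Nat.mod_lt _ i.pos⟩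

/-- Allowed configurations of the closed chain of `N` sites with periodic boundary
conditions: the chain is not fully occupied and no maximal cyclic run of occupied
sites is longer than `ℓ`. -/
def PerOK (N ℓ : ℕ) (σ : Config N) : Prop :=
  ∀ i : Fin N, ∃ k ≤ ℓ, σ (cyc i k) = false

/-- The fermionic sign `(-1)^{#{j < i : σ j = 1}}`. -/
def sgn {N : ℕ} (σ : Config N) (i : Fin N) : ℂ :=
  (-1 : ℂ) ^ ((Finset.univ.filter fun j => j < i ∧ σ j = true).card)

/-- The Hilbert space `V_N`: complex functions on allowed configurations. -/
abbrev AState (N : ℕ) (OK : Config N → Prop) := {σ : Config N // OK σ} → ℂ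

/-- Matrix of the supercharge with amplitudes `A`, with particle insertion
restricted to the sublattice `S`: the entry `(τ, σ)` is the amplitude (with fermionic
sign) for obtaining `τ` from `σ` by occupying an empty site of `S`. -/
def QmatA (N : ℕ) (OK : Config N → Prop) (S : Fin N → Prop)
    (A : Config N → Fin N → ℂ) :
    Matrix {σ : Config N // OK σ} {σ : Config N // OK σ} ℂ := fun τ σ =>
  ∑ i : Fin N,
    if S i ∧ σ.1 i = false ∧ τ.1 = Function.update σ.1 i true
    then A σ.1 i * sgn σ.1 i else 0

/-- The supercharge with amplitudes `A` restricted to the sublattice `S`, as a linear map. -/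
def QopA (N : ℕ) (OK : Config N → Prop) (S : Fin N → Prop)
    (A : Config N → Fin N → ℂ) : AState N OK →ₗ[ℂ] AState N OK :=
  (QmatA N OK S A).mulVecLin

/-- The unit-coupling supercharge restricted to the sublattice `S`. -/
def Qop (N : ℕ) (OK : Config N → Prop) (S : Fin N → Prop) :
    AState N OK →ₗ[ℂ] AState N OK :=
  QopA N OK S fun _ _ => 1

/-- The subspace `V_{N,f}` of states supported on configurations with fermion number `f`. -/
def gradeV (N : ℕ) (OK : Config N → Prop) (f : ℕ) :
    Submodule ℂ (AState N OK) where
  carrier := {ψ | ∀ σ, fermions σ.1 ≠ f → ψ σ = 0}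
  add_mem' := by
    intro a b ha hb σ h
    show a σ + b σ = 0
    rw [ha σ h, hb σ h, add_zero]
  zero_mem' := by intro σ h; rfl
  smul_mem' := by
    intro c a ha σ h
    show c * a σ = 0
    rw [ha σ h, mul_zero]

/-- The first sublattice `S₁ = {1, …, ℓ+2}` (the first `ℓ+2` sites). -/
def S1 (N ℓ : ℕ) : Fin N → Prop := fun i => i.1 < ℓ + 2

/-- The second sublattice `S₂ = {ℓ+3, …, N}` (the remaining sites). -/
def S2 (N ℓ : ℕ) : Fin N → Prop := fun i => ℓ + 2 ≤ i.1

/-- The configuration `χ σ'`: the `(ℓ+2)`-site configuration `χ = 0 1…1 0`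
followed by the `Ñ`-site configuration `σ'`. -/
def glue (ℓ Nt : ℕ) (σ : Config Nt) : Config (Nt + (ℓ + 2)) := fun i =>
  if h : i.1 < ℓ + 2 then decide (1 ≤ i.1 ∧ i.1 ≤ ℓ)
  else σ ⟨i.1 - (ℓ + 2), by have h2 := i.isLt; omega⟩

/-- Matrix of the map `G : V_Ñ → V_N`, `e_{σ'} ↦ e_{χ σ'}`. -/
def Gmat (ℓ Nt : ℕ) (OKN : Config (Nt + (ℓ + 2)) → Prop) (OKt : Config Nt → Prop) :
    Matrix {σ : Config (Nt + (ℓ + 2)) // OKN σ} {σ : Config Nt // OKt σ} ℂ :=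
  fun τ σ => if τ.1 = glue ℓ Nt σ.1 then 1 else 0

/-- The linear map `G : V_Ñ → V_N` sending `e_{σ'}` to `e_{χ σ'}`. -/
def Gop (ℓ Nt : ℕ) (OKN : Config (Nt + (ℓ + 2)) → Prop) (OKt : Config Nt → Prop) :
    AState Nt OKt →ₗ[ℂ] AState (Nt + (ℓ + 2)) OKN :=
  (Gmat ℓ Nt OKN OKt).mulVecLin

def mu (ℓ Nt j : ℕ) (σ : Config Nt) : Config (Nt + (ℓ + 2)) := fun i =>
  if h : i.1 < ℓ + 2 then decide (1 ≤ i.1 ∧ i.1 ≤ ℓ ∧ i.1 ≠ j + 1)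
  else σ ⟨i.1 - (ℓ + 2), by have h2 := i.isLt; omega⟩

lemma apply_eq_extc {N : ℕ} (σ : Config N) (i : Fin N) : σ i = extc σ i.1 := by
  rw [extc, dif_pos i.isLt]

lemma extc_glue (ℓ Nt : ℕ) (σ : Config Nt) (t : ℕ) :
    extc (glue ℓ Nt σ) t =
      if t < ℓ + 2 then decide (1 ≤ t ∧ t ≤ ℓ) else extc σ (t - (ℓ + 2)) := by
  rcases lt_or_ge t (ℓ + 2) with h | h
  · rw [if_pos h, extc, dif_pos (show t < Nt + (ℓ + 2) by omega), glue, dif_pos h]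
  · rw [if_neg (by omega)]
    rcases lt_or_ge t (Nt + (ℓ + 2)) with h2 | h2
    · have hne : ¬ (t < ℓ + 2) := by omega
      rw [extc, dif_pos h2, glue, dif_neg hne, extc,
        dif_pos (show t - (ℓ + 2) < Nt by omega)]
    · rw [extc, dif_neg (by omega), extc, dif_neg (by omega)]

lemma extc_mu (ℓ Nt j : ℕ) (σ : Config Nt) (t : ℕ) :
    extc (mu ℓ Nt j σ) t =
      if t < ℓ + 2 then decide (1 ≤ t ∧ t ≤ ℓ ∧ t ≠ j + 1) else extc σ (t - (ℓ + 2)) := by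
  rcases lt_or_ge t (ℓ + 2) with h | h
  · rw [if_pos h, extc, dif_pos (show t < Nt + (ℓ + 2) by omega), mu, dif_pos h]
  · rw [if_neg (by omega)]
    rcases lt_or_ge t (Nt + (ℓ + 2)) with h2 | h2
    · have hne : ¬ (t < ℓ + 2) := by omega
      rw [extc, dif_pos h2, mu, dif_neg hne, extc,
        dif_pos (show t - (ℓ + 2) < Nt by omega)]
    · rw [extc, dif_neg (by omega), extc, dif_neg (by omega)]

lemma extc_update' {N : ℕ} (σ : Config N) (p : ℕ) (hp : p < N) (b : Bool) (t : ℕ) :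
    extc (Function.update σ ⟨p, hp⟩ b) t = if t = p then b else extc σ t := by
  rcases lt_or_ge t N with h | h
  · rw [extc, dif_pos h, Function.update_apply]
    by_cases ht : t = p
    · rw [if_pos (by exact Fin.ext ht), if_pos ht]
    · rw [if_neg (fun hh => ht (by simpa using congrArg Fin.val hh)), if_neg ht, extc, dif_pos h]
  · rw [extc, dif_neg (by omega), if_neg (by omega), extc, dif_neg (by omega)]

lemma cyc_extc {N : ℕ} (σ : Config N) (i : Fin N) (t : ℕ) (h : i.1 + t < N) :
    σ (cyc i t) = extc σ (i.1 + t) := by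
  rw [apply_eq_extc σ (cyc i t)]
  congr 1
  exact Nat.mod_eq_of_lt h

lemma cyc_extc_wrap {N : ℕ} (σ : Config N) (i : Fin N) (t : ℕ) (h : N ≤ i.1 + t)
    (h2 : i.1 + t < 2 * N) :
    σ (cyc i t) = extc σ (i.1 + t - N) := by
  rw [apply_eq_extc σ (cyc i t)]
  congr 1
  show (i.1 + t) % N = _
  obtain ⟨r, hr, hr2⟩ : ∃ r, r < N ∧ i.1 + t = N + r := ⟨i.1 + t - N, by omega, by omega⟩
  rw [hr2, Nat.add_mod_left, Nat.mod_eq_of_lt hr]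
  omega

lemma cyc_extc_mk {N : ℕ} (σ : Config N) (p t : ℕ) (hp : p < N) (h : p + t < N) :
    σ (cyc ⟨p, hp⟩ t) = extc σ (p + t) :=
  cyc_extc σ ⟨p, hp⟩ t h

lemma cyc_extc_wrap_mk {N : ℕ} (σ : Config N) (p t : ℕ) (hp : p < N) (h : N ≤ p + t)
    (h2 : p + t < 2 * N) :
    σ (cyc ⟨p, hp⟩ t) = extc σ (p + t - N) :=
  cyc_extc_wrap σ ⟨p, hp⟩ t h h2

lemma extc_mono {N : ℕ} {σ τ : Config N} (h : ∀ i, σ i = true → τ i = true)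
    {t : ℕ} (ht : extc σ t = true) : extc τ t = true := by
  rw [extc] at ht ⊢
  by_cases hN : t < N
  · rw [dif_pos hN] at ht ⊢; exact h _ ht
  · rw [dif_neg hN] at ht; exact absurd ht (by simp)

lemma perOK_mono {N ℓ : ℕ} {σ τ : Config N} (h : ∀ i, σ i = true → τ i = true)
    (hτ : PerOK N ℓ τ) : PerOK N ℓ σ := by
  intro i
  obtain ⟨t, ht, hf⟩ := hτ i
  refine ⟨t, ht, ?_⟩
  cases hσ : σ (cyc i t) with
  | false => rfl
  | true => rw [h _ hσ] at hf; exact hf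

lemma openOK_mono {N ℓ c₁ cN : ℕ} {σ τ : Config N} (h : ∀ i, σ i = true → τ i = true)
    (hτ : OpenOK N ℓ c₁ cN τ) : OpenOK N ℓ c₁ cN σ := by
  obtain ⟨h1, h2, h3⟩ := hτ
  refine ⟨fun a ha => h1 a fun t ht => extc_mono h (ha t ht),
    fun hx => h2 ⟨hx.1, fun t ht => extc_mono h (hx.2 t ht)⟩,
    fun hx => h3 ⟨hx.1, fun t ht => extc_mono h (hx.2 t ht)⟩⟩

lemma mu_le_glue (ℓ Nt j : ℕ) (σ : Config Nt) :
    ∀ i, mu ℓ Nt j σ i = true → glue ℓ Nt σ i = true := by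
  intro i h
  rw [mu] at h
  rw [glue]
  by_cases hi : i.1 < ℓ + 2
  · rw [dif_pos hi] at h
    rw [dif_pos hi]
    simp only [decide_eq_true_eq] at h ⊢
    exact ⟨h.1, h.2.1⟩
  · rw [dif_neg hi] at h
    rw [dif_neg hi]
    exact h

lemma perOK_glue (ℓ Nt : ℕ) (hNt : ℓ < Nt) (σ' : Config Nt)
    (hclus : ∀ a : ℕ, ¬ ∀ t ≤ ℓ, extc σ' (a + t) = true) :
    PerOK (Nt + (ℓ + 2)) ℓ (glue ℓ Nt σ') := by
  intro i
  have hiN := i.isLt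
  rcases lt_or_ge i.1 (ℓ + 2) with h | h
  · rcases Nat.eq_zero_or_pos i.1 with h0 | h0
    · refine ⟨0, by omega, ?_⟩
      rw [cyc_extc (glue ℓ Nt σ') i 0 (by omega), extc_glue, if_pos (by omega)]
      simp only [decide_eq_false_iff_not]
      omega
    · refine ⟨ℓ + 1 - i.1, by omega, ?_⟩
      rw [cyc_extc (glue ℓ Nt σ') i (ℓ + 1 - i.1) (by omega), extc_glue, if_pos (by omega)]
      simp only [decide_eq_false_iff_not]
      omega
  · rcases lt_or_ge i.1 (Nt + 2) with h2 | h2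
    · obtain ⟨t, ht, hf⟩ : ∃ t ≤ ℓ, extc σ' (i.1 - (ℓ + 2) + t) = false := by
        have hh := hclus (i.1 - (ℓ + 2))
        push_neg at hh
        obtain ⟨t, ht, hf⟩ := hh
        exact ⟨t, ht, by simpa using hf⟩
      refine ⟨t, ht, ?_⟩
      rw [cyc_extc (glue ℓ Nt σ') i t (by omega), extc_glue, if_neg (by omega),
        (by omega : i.1 + t - (ℓ + 2) = i.1 - (ℓ + 2) + t)]
      exact hf
    · refine ⟨Nt + (ℓ + 2) - i.1, by omega, ?_⟩
      rw [cyc_extc_wrap (glue ℓ Nt σ') i (Nt + (ℓ + 2) - i.1) (by omega) (by omega),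
        (by omega : i.1 + (Nt + (ℓ + 2) - i.1) - (Nt + (ℓ + 2)) = 0),
        extc_glue, if_pos (by omega)]
      simp

lemma notPer_rho (ℓ Nt m : ℕ) (hNt : ℓ < Nt) (σ' : Config Nt)
    (hm1 : ∀ t < m, extc σ' (Nt - 1 - t) = true)
    (hm : 1 ≤ m) (hmℓ : m ≤ ℓ) :
    ¬ PerOK (Nt + (ℓ + 2)) ℓ
      (Function.update (mu ℓ Nt (ℓ - m) σ') ⟨0, by omega⟩ true) := by
  intro hper
  obtain ⟨t, ht, hf⟩ := hper ⟨Nt + (ℓ + 2) - m, by omega⟩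
  rcases lt_or_ge t m with hc | hc
  · rw [cyc_extc_mk (Function.update (mu ℓ Nt (ℓ - m) σ') ⟨0, by omega⟩ true)
        (Nt + (ℓ + 2) - m) t (by omega) (by omega), extc_update', if_neg (by omega), extc_mu,
      if_neg (by omega),
      (by omega : Nt + (ℓ + 2) - m + t - (ℓ + 2) = Nt - 1 - (m - 1 - t)),
      hm1 _ (by omega)] at hf
    exact Bool.noConfusion hf
  · rw [cyc_extc_wrap_mk (Function.update (mu ℓ Nt (ℓ - m) σ') ⟨0, by omega⟩ true)
        (Nt + (ℓ + 2) - m) t (by omega) (by omega) (by omega), extc_update'] at hf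
    by_cases h0 : Nt + (ℓ + 2) - m + t - (Nt + (ℓ + 2)) = 0
    · rw [if_pos h0] at hf
      exact Bool.noConfusion hf
    · rw [if_neg h0, extc_mu, if_pos (by omega)] at hf
      simp only [decide_eq_false_iff_not] at hf
      omega

lemma notPer_lam (ℓ Nt k m : ℕ) (hNt : ℓ < Nt) (σ' : Config Nt)
    (hk1 : ∀ t < k, extc σ' t = true)
    (hm : 1 ≤ m) (hmℓ : m ≤ ℓ) (hkm : ℓ < k + m) :
    ¬ PerOK (Nt + (ℓ + 2)) ℓ
      (Function.update (mu ℓ Nt (ℓ - m) σ') ⟨ℓ + 1, by omega⟩ true) := by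
  intro hper
  obtain ⟨t, ht, hf⟩ := hper ⟨ℓ - m + 2, by omega⟩
  rw [cyc_extc_mk (Function.update (mu ℓ Nt (ℓ - m) σ') ⟨ℓ + 1, by omega⟩ true)
      (ℓ - m + 2) t (by omega) (by omega), extc_update'] at hf
  by_cases hL : ℓ - m + 2 + t = ℓ + 1
  · rw [if_pos hL] at hf
    exact Bool.noConfusion hf
  · rw [if_neg hL, extc_mu] at hf
    rcases lt_or_ge (ℓ - m + 2 + t) (ℓ + 2) with hq | hq
    · rw [if_pos hq] at hf
      simp only [decide_eq_false_iff_not] at hf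
      omega
    · rw [if_neg (by omega),
        (by omega : ℓ - m + 2 + t - (ℓ + 2) = t - m),
        hk1 (t - m) (by omega)] at hf
      exact Bool.noConfusion hf

lemma openOK_glue (ℓ Nt c₁ cN m : ℕ) (hNt : ℓ < Nt) (σ' : Config Nt)
    (hclus : ∀ a : ℕ, ¬ ∀ t ≤ ℓ, extc σ' (a + t) = true)
    (hmcN : m = cN) (hmℓ : m ≤ ℓ)
    (hm2 : extc σ' (Nt - 1 - m) = false) :
    OpenOK (Nt + (ℓ + 2)) ℓ c₁ cN (glue ℓ Nt σ') := by
  refine ⟨?_, ?_, ?_⟩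
  · intro a hall
    rcases lt_or_ge a (ℓ + 2) with h | h
    · rcases Nat.eq_zero_or_pos a with h0 | h0
      · have hv := hall 0 (by omega)
        rw [extc_glue, if_pos (by omega)] at hv
        simp only [decide_eq_true_eq] at hv
        omega
      · have hv := hall (ℓ + 1 - a) (by omega)
        rw [extc_glue, if_pos (by omega)] at hv
        simp only [decide_eq_true_eq] at hv
        omega
    · apply hclus (a - (ℓ + 2))
      intro t htl
      have hv := hall t htl
      rw [extc_glue, if_neg (by omega)] at hv
      rwa [(by omega : a + t - (ℓ + 2) = a - (ℓ + 2) + t)] at hv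
  · rintro ⟨-, hall⟩
    have hv := hall 0 (by omega)
    rw [extc_glue, if_pos (by omega)] at hv
    simp only [decide_eq_true_eq] at hv
    omega
  · rintro ⟨-, hall⟩
    have hv := hall cN le_rfl
    rw [(by omega : Nt + (ℓ + 2) - 1 - cN = Nt - 1 - m + (ℓ + 2)), extc_glue,
      if_neg (by omega), (by omega : Nt - 1 - m + (ℓ + 2) - (ℓ + 2) = Nt - 1 - m),
      hm2] at hv
    exact Bool.noConfusion hv

lemma notOpen_rho (ℓ Nt c₁ cN : ℕ) (hNt : ℓ < Nt) (σ' : Config Nt) (hc₁ : c₁ ≤ ℓ) :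
    ¬ OpenOK (Nt + (ℓ + 2)) ℓ c₁ cN
      (Function.update (mu ℓ Nt c₁ σ') ⟨0, by omega⟩ true) := by
  rintro ⟨-, h2, -⟩
  apply h2
  refine ⟨by omega, ?_⟩
  intro t htc
  rw [extc_update']
  by_cases h0 : t = 0
  · rw [if_pos h0]
  · rw [if_neg h0, extc_mu, if_pos (by omega)]
    simp only [decide_eq_true_eq]
    omega

lemma notOpen_lam (ℓ Nt k c₁ cN : ℕ) (hNt : ℓ < Nt) (σ' : Config Nt)
    (hk1 : ∀ t < k, extc σ' t = true) (hck : c₁ < k) (hkℓ : k ≤ ℓ) :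
    ¬ OpenOK (Nt + (ℓ + 2)) ℓ c₁ cN
      (Function.update (mu ℓ Nt c₁ σ') ⟨ℓ + 1, by omega⟩ true) := by
  rintro ⟨h1, -, -⟩
  apply h1 (c₁ + 2)
  intro t htl
  rw [extc_update']
  by_cases hL : c₁ + 2 + t = ℓ + 1
  · rw [if_pos hL]
  · rw [if_neg hL, extc_mu]
    rcases lt_or_ge (c₁ + 2 + t) (ℓ + 2) with hq | hq
    · rw [if_pos hq]
      simp only [decide_eq_true_eq]
      omega
    · rw [if_neg (by omega),
        (by omega : c₁ + 2 + t - (ℓ + 2) = t - (ℓ - c₁)),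
        hk1 _ (by omega)]

lemma key (ℓ Nt j : ℕ) (hj : j + 1 ≤ ℓ) (σ' : Config Nt)
    (OK : Config (Nt + (ℓ + 2)) → Prop)
    (hokg : OK (glue ℓ Nt σ'))
    (hokm : OK (mu ℓ Nt j σ'))
    (hbad0 : ¬ OK (Function.update (mu ℓ Nt j σ') ⟨0, by omega⟩ true))
    (hbadL : ¬ OK (Function.update (mu ℓ Nt j σ') ⟨ℓ + 1, by omega⟩ true)) :
    ∃ (hok : OK (glue ℓ Nt σ'))
      (φ : AState (Nt + (ℓ + 2)) OK),
      Pi.single (⟨glue ℓ Nt σ', hok⟩ : {σ : Config (Nt + (ℓ + 2)) // OK σ}) (1 : ℂ) =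
        Qop (Nt + (ℓ + 2)) OK (S1 (Nt + (ℓ + 2)) ℓ) φ := by
  classical
  refine ⟨hokg, ?_⟩
  have hjN : j + 1 < Nt + (ℓ + 2) := by omega
  set μ : Config (Nt + (ℓ + 2)) := mu ℓ Nt j σ' with hμdef
  set i₀ : Fin (Nt + (ℓ + 2)) := ⟨j + 1, hjN⟩ with hi₀def
  have hμi₀ : μ i₀ = false := by
    rw [hμdef, hi₀def, apply_eq_extc (mu ℓ Nt j σ') ⟨j + 1, hjN⟩]
    show extc (mu ℓ Nt j σ') (j + 1) = false
    rw [extc_mu, if_pos (by omega)]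
    simp only [decide_eq_false_iff_not]
    omega
  have hg1 : glue ℓ Nt σ' i₀ = true := by
    rw [hi₀def, apply_eq_extc (glue ℓ Nt σ') ⟨j + 1, hjN⟩]
    show extc (glue ℓ Nt σ') (j + 1) = true
    rw [extc_glue, if_pos (by omega)]
    simp only [decide_eq_true_eq]
    omega
  have hupd : Function.update μ i₀ true = glue ℓ Nt σ' := by
    funext i
    rcases eq_or_ne i i₀ with rfl | hne
    · rw [Function.update_self, hg1]
    · rw [Function.update_of_ne hne, hμdef,
        apply_eq_extc (mu ℓ Nt j σ') i, apply_eq_extc (glue ℓ Nt σ') i,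
        extc_mu, extc_glue]
      have hv : i.1 ≠ j + 1 := fun h => hne (Fin.ext h)
      by_cases hi : i.1 < ℓ + 2
      · rw [if_pos hi, if_pos hi, decide_eq_decide]
        tauto
      · rw [if_neg hi, if_neg hi]
  set s : ℂ := sgn μ i₀ with hsdef
  have hs : s ≠ 0 := by
    rw [hsdef]
    unfold sgn
    exact pow_ne_zero _ (by norm_num)
  refine ⟨s⁻¹ • (Pi.single ⟨μ, hokm⟩ 1 : AState (Nt + (ℓ + 2)) OK), ?_⟩
  funext τ
  have hQ : Qop (Nt + (ℓ + 2)) OK (S1 (Nt + (ℓ + 2)) ℓ) (s⁻¹ • (Pi.single ⟨μ, hokm⟩ 1 : AState (Nt + (ℓ + 2)) OK)) τ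
      = QmatA (Nt + (ℓ + 2)) OK (S1 (Nt + (ℓ + 2)) ℓ) (fun _ _ => 1) τ ⟨μ, hokm⟩ * s⁻¹ := by
    show (QmatA (Nt + (ℓ + 2)) OK (S1 (Nt + (ℓ + 2)) ℓ) fun _ _ => 1).mulVec (s⁻¹ • (Pi.single ⟨μ, hokm⟩ 1 : AState (Nt + (ℓ + 2)) OK)) τ = _
    rw [Matrix.mulVec, dotProduct]
    rw [Finset.sum_eq_single (⟨μ, hokm⟩ : {σ : Config (Nt + (ℓ + 2)) // OK σ})]
    · rw [Pi.smul_apply, Pi.single_eq_same, smul_eq_mul, mul_one]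
    · intro b _ hb
      rw [Pi.smul_apply, Pi.single_eq_of_ne hb, smul_zero, mul_zero]
    · intro hmem
      exact absurd (Finset.mem_univ _) hmem
  by_cases hτ : τ = (⟨glue ℓ Nt σ', hokg⟩ : {σ : Config (Nt + (ℓ + 2)) // OK σ})
  · subst hτ
    rw [hQ, Pi.single_eq_same]
    have hS : S1 (Nt + (ℓ + 2)) ℓ i₀ := by
      rw [hi₀def]
      show j + 1 < ℓ + 2
      omega
    have hmv : QmatA (Nt + (ℓ + 2)) OK (S1 (Nt + (ℓ + 2)) ℓ) (fun _ _ => 1) ⟨glue ℓ Nt σ', hokg⟩ ⟨μ, hokm⟩ = s := by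
      show (∑ i : Fin (Nt + (ℓ + 2)),
        if S1 (Nt + (ℓ + 2)) ℓ i ∧ μ i = false ∧ glue ℓ Nt σ' = Function.update μ i true
        then (1 : ℂ) * sgn μ i else 0) = s
      rw [Finset.sum_eq_single i₀]
      · rw [if_pos ⟨hS, hμi₀, hupd.symm⟩, one_mul]
      · intro i _ hi
        rw [if_neg]
        rintro ⟨-, -, heq⟩
        have hcv := congrFun heq i₀
        rw [Function.update_of_ne (Ne.symm hi), hg1, hμi₀] at hcv
        exact Bool.noConfusion hcv
      · intro hmem
        exact absurd (Finset.mem_univ _) hmem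
    rw [hmv]
    exact (mul_inv_cancel₀ hs).symm
  · rw [hQ, Pi.single_eq_of_ne hτ]
    have hmv : QmatA (Nt + (ℓ + 2)) OK (S1 (Nt + (ℓ + 2)) ℓ) (fun _ _ => 1) τ ⟨μ, hokm⟩ = 0 := by
      show (∑ i : Fin (Nt + (ℓ + 2)),
        if S1 (Nt + (ℓ + 2)) ℓ i ∧ μ i = false ∧ τ.1 = Function.update μ i true
        then (1 : ℂ) * sgn μ i else 0) = 0
      apply Finset.sum_eq_zero
      intro i _
      rw [if_neg]
      rintro ⟨hSi, hf, heq⟩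
      have hi2 : i.1 < ℓ + 2 := hSi
      have hfe : extc (mu ℓ Nt j σ') i.1 = false := by
        rw [← apply_eq_extc (mu ℓ Nt j σ') i, ← hμdef]
        exact hf
      rw [extc_mu, if_pos hi2] at hfe
      simp only [decide_eq_false_iff_not] at hfe
      have hcase : i.1 = 0 ∨ i.1 = j + 1 ∨ i.1 = ℓ + 1 := by omega
      rcases hcase with h0 | h1 | hL
      · have hieq : i = (⟨0, by omega⟩ : Fin (Nt + (ℓ + 2))) := Fin.ext h0
        rw [hieq, hμdef] at heq
        have hOK := τ.2
        rw [heq] at hOK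
        exact hbad0 hOK
      · have hieq : i = i₀ := Fin.ext h1
        rw [hieq, hupd] at heq
        exact hτ (Subtype.ext heq)
      · have hieq : i = (⟨ℓ + 1, by omega⟩ : Fin (Nt + (ℓ + 2))) := Fin.ext hL
        rw [hieq, hμdef] at heq
        have hOK := τ.2
        rw [heq] at hOK
        exact hbadL hOK
    rw [hmv, zero_mul]

/-- Let `σ'` be a configuration of `Ñ` sites (with `N = Ñ + (ℓ+2) > 2ℓ+2`) all of
whose clusters have length at most `ℓ`, whose first site belongs to a cluster of
length `k` and whose last site belongs to a cluster of length `m`. If `k + m > ℓ`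
(periodic case), respectively `k > c₁` and `m = cN` (special case), then the basis
state `e_{χσ'}` of `V_N` is a `Q₁`-coboundary. -/
theorem chi_glue_is_Q1_coboundary (ℓ Nt : ℕ) (hℓ : 1 ≤ ℓ) (hNt : ℓ < Nt)
    (σ' : Config Nt)
    (hclus : ∀ a : ℕ, ¬ ∀ t ≤ ℓ, extc σ' (a + t) = true)
    (k m : ℕ) (hkN : k ≤ Nt) (hmN : m ≤ Nt)
    (hk1 : ∀ t < k, extc σ' t = true) (hk2 : extc σ' k = false)
    (hm1 : ∀ t < m, extc σ' (Nt - 1 - t) = true)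
    (hm2 : m = Nt ∨ extc σ' (Nt - 1 - m) = false) :
    (ℓ < k + m →
      ∃ (hok : PerOK (Nt + (ℓ + 2)) ℓ (glue ℓ Nt σ'))
        (φ : AState (Nt + (ℓ + 2)) (PerOK (Nt + (ℓ + 2)) ℓ)),
        Pi.single
            (⟨glue ℓ Nt σ', hok⟩ : {σ : Config (Nt + (ℓ + 2)) // PerOK (Nt + (ℓ + 2)) ℓ σ})
            (1 : ℂ) =
          Qop (Nt + (ℓ + 2)) (PerOK (Nt + (ℓ + 2)) ℓ) (S1 (Nt + (ℓ + 2)) ℓ) φ) ∧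
    (∀ c₁ cN, c₁ ≤ ℓ → cN ≤ ℓ → c₁ < k → m = cN →
      ∃ (hok : OpenOK (Nt + (ℓ + 2)) ℓ c₁ cN (glue ℓ Nt σ'))
        (φ : AState (Nt + (ℓ + 2)) (OpenOK (Nt + (ℓ + 2)) ℓ c₁ cN)),
        Pi.single
            (⟨glue ℓ Nt σ', hok⟩ :
              {σ : Config (Nt + (ℓ + 2)) // OpenOK (Nt + (ℓ + 2)) ℓ c₁ cN σ})
            (1 : ℂ) =
          Qop (Nt + (ℓ + 2)) (OpenOK (Nt + (ℓ + 2)) ℓ c₁ cN) (S1 (Nt + (ℓ + 2)) ℓ) φ) := by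
  have hkl : k ≤ ℓ := by
    by_contra hkk
    exact hclus 0 fun t ht => by
      rw [zero_add]; exact hk1 t (by omega)
  have hml : m ≤ ℓ := by
    by_contra hmm
    apply hclus (Nt - 1 - ℓ)
    intro t ht
    rw [(by omega : Nt - 1 - ℓ + t = Nt - 1 - (ℓ - t))]
    exact hm1 (ℓ - t) (by omega)
  have hm2' : extc σ' (Nt - 1 - m) = false := by
    rcases hm2 with h | h
    · exact absurd h (by omega)
    · exact h
  constructor
  · intro hkm
    have hm1' : 1 ≤ m := by omega
    have hglue := perOK_glue ℓ Nt hNt σ' hclus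
    exact key ℓ Nt (ℓ - m) (by omega) σ' (PerOK (Nt + (ℓ + 2)) ℓ) hglue
      (perOK_mono (mu_le_glue ℓ Nt (ℓ - m) σ') hglue)
      (notPer_rho ℓ Nt m hNt σ' hm1 hm1' hml)
      (notPer_lam ℓ Nt k m hNt σ' hk1 hm1' hml hkm)
  · intro c₁ cN hc₁ hcN hck hmcN
    have hglue := openOK_glue ℓ Nt c₁ cN m hNt σ' hclus hmcN hml hm2'
    exact key ℓ Nt c₁ (by omega) σ' (OpenOK (Nt + (ℓ + 2)) ℓ c₁ cN) hglue
      (openOK_mono (mu_le_glue ℓ Nt c₁ σ') hglue)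
      (notOpen_rho ℓ Nt c₁ cN hNt σ' hc₁)
      (notOpen_lam ℓ Nt k c₁ cN hNt σ' hk1 hck hkl)


end
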